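/- Let G = (V,E) be a graph on {1,…,n} with k ≥ 1 edges and maximum degree d, and perform t i.i.d. Bernoulli(p) tests. Write P₁ = P_G[Y=1], ξ = (1+2d)p², ξ′ = 2dp, and assume p²·(1 − P₁ + ξ) ≤ 1. Then the probability that at least one edge of E is masked (i.e., every test containing both its endpoints also covers some other edge of E) is at least k·(1 − p²(1 − P₁ + ξ))^{2t} / ( (1 − p²(1 − P₁ − ξ′))^{t} + k·max(0, 1 − 2p²(1 − P₁ − ξ′))^{t} ). -/

import Mathlib

open scoped BigOperators Classical
open Finset Filter

noncomputable section

/-- The set of all potential edges: unordered pairs of distinct nodes of `Fin n`. -/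
def allPairs (n : ℕ) : Finset (Sym2 (Fin n)) :=
  Finset.univ.filter fun e => ¬ e.IsDiag

/-- Both endpoints of the pair `e` lie in the test `L`. -/
def pairIn {n : ℕ} (e : Sym2 (Fin n)) (L : Finset (Fin n)) : Prop :=
  ∀ v ∈ e, v ∈ L

/-- The test `L` covers some edge of the edge set `E` (positive outcome `Y = 1`). -/
def covers {n : ℕ} (E : Finset (Sym2 (Fin n))) (L : Finset (Fin n)) : Prop :=
  ∃ e ∈ E, pairIn e L

/-- ER(n,q) probability weight of a given edge set `E`. -/
def erWeight (n : ℕ) (q : ℝ) (E : Finset (Sym2 (Fin n))) : ℝ :=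
  q ^ E.card * (1 - q) ^ ((allPairs n).card - E.card)

/-- Probability of an event under the Erdős–Rényi random graph ER(n,q). -/
def erProb (n : ℕ) (q : ℝ) (A : Finset (Sym2 (Fin n)) → Prop) : ℝ :=
  ∑ E ∈ (allPairs n).powerset, if A E then erWeight n q E else 0

/-- Bernoulli(p) probability weight of a single test `L ⊆ {1,…,n}`. -/
def testWeight (n : ℕ) (p : ℝ) (L : Finset (Fin n)) : ℝ :=
  p ^ L.card * (1 - p) ^ (n - L.card)

/-- Probability of an event for a single Bernoulli(p) test. -/
def bernProb (n : ℕ) (p : ℝ) (A : Finset (Fin n) → Prop) : ℝ :=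
  ∑ L : Finset (Fin n), if A L then testWeight n p L else 0

/-- Probability weight of `t` i.i.d. Bernoulli(p) tests. -/
def testsWeight (n t : ℕ) (p : ℝ) (Ls : Fin t → Finset (Fin n)) : ℝ :=
  ∏ i, testWeight n p (Ls i)

/-- Probability of an event for `t` i.i.d. Bernoulli(p) tests. -/
def bernTestsProb (n t : ℕ) (p : ℝ) (A : (Fin t → Finset (Fin n)) → Prop) : ℝ :=
  ∑ Ls : Fin t → Finset (Fin n), if A Ls then testsWeight n t p Ls else 0

/-- Joint probability over an ER(n,q) graph and `t` i.i.d. Bernoulli(p) tests. -/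
def erTestsProb (n t : ℕ) (q p : ℝ)
    (A : Finset (Sym2 (Fin n)) → (Fin t → Finset (Fin n)) → Prop) : ℝ :=
  ∑ E ∈ (allPairs n).powerset, ∑ Ls : Fin t → Finset (Fin n),
    if A E Ls then erWeight n q E * testsWeight n t p Ls else 0

/-- Degree of node `v` in the edge set `E`. -/
def degOf {n : ℕ} (E : Finset (Sym2 (Fin n))) (v : Fin n) : ℕ :=
  (E.filter fun e => v ∈ e).card

/-- Maximum degree of the edge set `E`. -/
def maxDeg {n : ℕ} (E : Finset (Sym2 (Fin n))) : ℕ :=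
  Finset.univ.sup (degOf E)

/-- Average number of edges of ER(n, q n): `k̄ = q·C(n,2)`. -/
def kbar (q : ℕ → ℝ) (n : ℕ) : ℝ := q n * (n.choose 2 : ℝ)

/-- Two pairs are vertex-disjoint. -/
def sym2Disjoint {n : ℕ} (e e' : Sym2 (Fin n)) : Prop := ∀ v, v ∈ e → v ∉ e'

/-- auxiliary machinery -/


def chi (A : Prop) : ℝ := if A then 1 else 0

lemma chi_pos {A : Prop} (h : A) : chi A = 1 := if_pos h
lemma chi_neg {A : Prop} (h : ¬ A) : chi A = 0 := if_neg h

lemma chi_nonneg (A : Prop) : 0 ≤ chi A := by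
  by_cases h : A <;> simp [chi, h]

lemma chi_le_one (A : Prop) : chi A ≤ 1 := by
  by_cases h : A <;> simp [chi, h]

lemma chi_mono {A B : Prop} (h : A → B) : chi A ≤ chi B := by
  by_cases hA : A
  · rw [chi_pos hA, chi_pos (h hA)]
  · rw [chi_neg hA]; exact chi_nonneg B

lemma chi_not (A : Prop) : chi (¬ A) = 1 - chi A := by
  by_cases h : A <;> simp [chi, h]

lemma chi_congr {A B : Prop} (h : A ↔ B) : chi A = chi B := by
  by_cases hA : A
  · rw [chi_pos hA, chi_pos (h.mp hA)]
  · rw [chi_neg hA, chi_neg (fun hB => hA (h.mpr hB))]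

lemma chi_sq (A : Prop) : chi A * chi A = chi A := by
  by_cases h : A <;> simp [chi, h]

lemma testWeight_nonneg {n : ℕ} {p : ℝ} (hp0 : 0 ≤ p) (hp1 : p ≤ 1) (L : Finset (Fin n)) :
    0 ≤ testWeight n p L :=
  mul_nonneg (pow_nonneg hp0 _) (pow_nonneg (by linarith) _)

lemma bernProb_eq (n : ℕ) (p : ℝ) (A : Finset (Fin n) → Prop) :
    bernProb n p A = ∑ L : Finset (Fin n), chi (A L) * testWeight n p L := by
  apply Finset.sum_congr rfl
  intro L _
  by_cases h : A L <;> simp [chi, h]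

lemma sum_testWeight (n : ℕ) (p : ℝ) : ∑ L : Finset (Fin n), testWeight n p L = 1 := by
  have h := Finset.prod_add (fun _ : Fin n => p) (fun _ : Fin n => 1 - p) Finset.univ
  simp only [Finset.prod_const, Finset.powerset_univ] at h
  have h2 : ∀ L : Finset (Fin n), p ^ L.card * (1 - p) ^ (Finset.univ \ L).card
      = testWeight n p L := by
    intro L
    rw [Finset.card_univ_diff, Fintype.card_fin, testWeight]
  calc ∑ L : Finset (Fin n), testWeight n p L
      = ∑ L : Finset (Fin n), p ^ L.card * (1 - p) ^ (Finset.univ \ L).card := by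
        exact Finset.sum_congr rfl fun L _ => (h2 L).symm
    _ = (p + (1 - p)) ^ n := by rw [← h, Finset.card_univ, Fintype.card_fin]
    _ = 1 := by norm_num

lemma sum_cond_vertex (n : ℕ) (p : ℝ) (a : Fin n) (D : Finset (Fin n) → Prop)
    (hD : ∀ L, D (insert a L) ↔ D L) :
    ∑ L : Finset (Fin n), chi (a ∈ L ∧ D L) * testWeight n p L
      = p * ∑ L : Finset (Fin n), chi (D L) * testWeight n p L := by
  have ha : a ∉ Finset.univ.erase a := Finset.notMem_erase a _
  have hps : (Finset.univ : Finset (Finset (Fin n)))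
      = (insert a (Finset.univ.erase a)).powerset := by
    rw [Finset.insert_erase (Finset.mem_univ a), Finset.powerset_univ]
  have hcard : (Finset.univ.erase a).card = n - 1 := by
    rw [Finset.card_erase_of_mem (Finset.mem_univ a), Finset.card_univ, Fintype.card_fin]
  rw [hps, Finset.sum_powerset_insert ha, Finset.sum_powerset_insert ha, mul_add]
  have key : ∀ t ∈ (Finset.univ.erase a).powerset,
      chi (a ∈ insert a t ∧ D (insert a t)) * testWeight n p (insert a t)
        = p * (chi (D t) * testWeight n p t)
          + p * (chi (D (insert a t)) * testWeight n p (insert a t)) := by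
    intro t ht
    have hat : a ∉ t := fun h => ha (Finset.mem_powerset.mp ht h)
    have hc : t.card ≤ n - 1 := hcard ▸ Finset.card_le_card (Finset.mem_powerset.mp ht)
    have hn1 : 1 ≤ n := Nat.one_le_iff_ne_zero.mpr (by rintro rfl; exact a.elim0)
    have hci : (insert a t).card = t.card + 1 := Finset.card_insert_of_notMem hat
    by_cases hDt : D t
    · rw [chi_pos ⟨Finset.mem_insert_self a t, (hD t).mpr hDt⟩, chi_pos hDt,
        chi_pos ((hD t).mpr hDt)]
      unfold testWeight
      rw [hci]
      have e1 : n - t.card = (n - 1 - t.card) + 1 := by omega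
      have e2 : n - (t.card + 1) = n - 1 - t.card := by omega
      rw [e1, e2]
      ring
    · rw [chi_neg (fun h => hDt ((hD t).mp h.2)), chi_neg hDt,
        chi_neg (fun h => hDt ((hD t).mp h))]
      ring
  have z1 : ∑ t ∈ (Finset.univ.erase a).powerset,
      chi (a ∈ t ∧ D t) * testWeight n p t = 0 := by
    apply Finset.sum_eq_zero
    intro t ht
    rw [chi_neg (fun h => ha (Finset.mem_powerset.mp ht h.1)), zero_mul]
  rw [z1, zero_add, Finset.sum_congr rfl key, Finset.sum_add_distrib,
    ← Finset.mul_sum, ← Finset.mul_sum]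

lemma sum_cond_pair (n : ℕ) (p : ℝ) (a b : Fin n) (hab : a ≠ b) (D : Finset (Fin n) → Prop)
    (hDa : ∀ L, D (insert a L) ↔ D L) (hDb : ∀ L, D (insert b L) ↔ D L) :
    ∑ L : Finset (Fin n), chi (a ∈ L ∧ b ∈ L ∧ D L) * testWeight n p L
      = p ^ 2 * ∑ L : Finset (Fin n), chi (D L) * testWeight n p L := by
  have h1 := sum_cond_vertex n p a (fun L => b ∈ L ∧ D L) (by
    intro L
    constructor
    · rintro ⟨hb, hd⟩
      exact ⟨(Finset.mem_insert.mp hb).resolve_left (fun h => (hab (h ▸ rfl)).elim),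
        (hDa L).mp hd⟩
    · rintro ⟨hb, hd⟩
      exact ⟨Finset.mem_insert_of_mem hb, (hDa L).mpr hd⟩)
  calc ∑ L : Finset (Fin n), chi (a ∈ L ∧ b ∈ L ∧ D L) * testWeight n p L
      = p * ∑ L : Finset (Fin n), chi (b ∈ L ∧ D L) * testWeight n p L := h1
    _ = p * (p * ∑ L : Finset (Fin n), chi (D L) * testWeight n p L) := by
        rw [sum_cond_vertex n p b D hDb]
    _ = p ^ 2 * ∑ L : Finset (Fin n), chi (D L) * testWeight n p L := by ring

lemma bp_nonneg {n : ℕ} {p : ℝ} (hp0 : 0 ≤ p) (hp1 : p ≤ 1) (A : Finset (Fin n) → Prop) :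
    0 ≤ ∑ L : Finset (Fin n), chi (A L) * testWeight n p L :=
  Finset.sum_nonneg fun L _ => mul_nonneg (chi_nonneg _) (testWeight_nonneg hp0 hp1 L)

lemma bp_mono {n : ℕ} {p : ℝ} (hp0 : 0 ≤ p) (hp1 : p ≤ 1)
    {A B : Finset (Fin n) → Prop} (h : ∀ L, A L → B L) :
    ∑ L : Finset (Fin n), chi (A L) * testWeight n p L
      ≤ ∑ L : Finset (Fin n), chi (B L) * testWeight n p L :=
  Finset.sum_le_sum fun L _ =>
    mul_le_mul_of_nonneg_right (chi_mono (h L)) (testWeight_nonneg hp0 hp1 L)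

lemma bp_compl {n : ℕ} {p : ℝ} (A : Finset (Fin n) → Prop) :
    ∑ L : Finset (Fin n), chi (¬ A L) * testWeight n p L
      = 1 - ∑ L : Finset (Fin n), chi (A L) * testWeight n p L := by
  have h : ∑ L : Finset (Fin n), chi (¬ A L) * testWeight n p L
      + ∑ L : Finset (Fin n), chi (A L) * testWeight n p L
      = ∑ L : Finset (Fin n), testWeight n p L := by
    rw [← Finset.sum_add_distrib]
    apply Finset.sum_congr rfl
    intro L _
    rw [chi_not, ← add_mul]
    ring
  rw [sum_testWeight] at h
  linarith

lemma bp_le_one {n : ℕ} {p : ℝ} (hp0 : 0 ≤ p) (hp1 : p ≤ 1) (A : Finset (Fin n) → Prop) :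
    ∑ L : Finset (Fin n), chi (A L) * testWeight n p L ≤ 1 := by
  have h1 := bp_nonneg hp0 hp1 (fun L => ¬ A L)
  rw [bp_compl A] at h1
  linarith

lemma bp_add_le {n : ℕ} {p : ℝ} (hp0 : 0 ≤ p) (hp1 : p ≤ 1)
    {A B C : Finset (Fin n) → Prop} (h : ∀ L, A L → B L ∨ C L) :
    ∑ L : Finset (Fin n), chi (A L) * testWeight n p L
      ≤ (∑ L : Finset (Fin n), chi (B L) * testWeight n p L)
        + ∑ L : Finset (Fin n), chi (C L) * testWeight n p L := by
  rw [← Finset.sum_add_distrib]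
  apply Finset.sum_le_sum
  intro L _
  rw [← add_mul]
  apply mul_le_mul_of_nonneg_right _ (testWeight_nonneg hp0 hp1 L)
  by_cases hA : A L
  · rcases h L hA with hB | hC
    · have := chi_nonneg (C L)
      rw [chi_pos hA, chi_pos hB]
      linarith
    · have := chi_nonneg (B L)
      rw [chi_pos hA, chi_pos hC]
      linarith
  · have := chi_nonneg (B L)
    have := chi_nonneg (C L)
    rw [chi_neg hA]
    linarith

lemma bp_disjoint_add_le {n : ℕ} {p : ℝ} (hp0 : 0 ≤ p) (hp1 : p ≤ 1)
    {B C : Finset (Fin n) → Prop} (h : ∀ L, ¬ (B L ∧ C L)) :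
    (∑ L : Finset (Fin n), chi (B L) * testWeight n p L)
      + ∑ L : Finset (Fin n), chi (C L) * testWeight n p L
      ≤ ∑ L : Finset (Fin n), chi (B L ∨ C L) * testWeight n p L := by
  rw [← Finset.sum_add_distrib]
  apply Finset.sum_le_sum
  intro L _
  rw [← add_mul]
  apply mul_le_mul_of_nonneg_right _ (testWeight_nonneg hp0 hp1 L)
  by_cases hB : B L
  · rw [chi_pos hB, chi_neg (fun hC => h L ⟨hB, hC⟩), chi_pos (Or.inl hB)]
    norm_num
  · rw [chi_neg hB, zero_add]
    exact chi_mono Or.inr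

lemma bp_union_le {n : ℕ} {p : ℝ} (hp0 : 0 ≤ p) (hp1 : p ≤ 1)
    {ι : Type*} (s : Finset ι) (P : ι → Finset (Fin n) → Prop) :
    ∑ L : Finset (Fin n), chi (∃ x ∈ s, P x L) * testWeight n p L
      ≤ ∑ x ∈ s, ∑ L : Finset (Fin n), chi (P x L) * testWeight n p L := by
  rw [Finset.sum_comm]
  apply Finset.sum_le_sum
  intro L _
  by_cases h : ∃ x ∈ s, P x L
  · obtain ⟨x, hx, hPx⟩ := h
    calc chi (∃ x ∈ s, P x L) * testWeight n p L
        = chi (P x L) * testWeight n p L := by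
          rw [chi_pos ⟨x, hx, hPx⟩, chi_pos hPx]
      _ ≤ ∑ y ∈ s, chi (P y L) * testWeight n p L :=
          Finset.single_le_sum (f := fun y => chi (P y L) * testWeight n p L)
            (fun y _ => mul_nonneg (chi_nonneg _) (testWeight_nonneg hp0 hp1 L)) hx
  · rw [chi_neg h, zero_mul]
    exact Finset.sum_nonneg fun y _ =>
      mul_nonneg (chi_nonneg _) (testWeight_nonneg hp0 hp1 L)

lemma bp_mem (n : ℕ) (p : ℝ) (a : Fin n) :
    ∑ L : Finset (Fin n), chi (a ∈ L) * testWeight n p L = p := by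
  have h := sum_cond_vertex n p a (fun _ => True) (fun _ => Iff.rfl)
  have h2 : ∑ L : Finset (Fin n), chi (a ∈ L) * testWeight n p L
      = ∑ L : Finset (Fin n), chi (a ∈ L ∧ True) * testWeight n p L :=
    Finset.sum_congr rfl fun L _ => by by_cases hL : a ∈ L <;> simp [chi, hL]
  rw [h2, h]
  have h3 : ∑ L : Finset (Fin n), chi True * testWeight n p L
      = ∑ L : Finset (Fin n), testWeight n p L :=
    Finset.sum_congr rfl fun L _ => by rw [chi_pos trivial, one_mul]
  rw [h3, sum_testWeight, mul_one]

lemma bernTestsProb_eq (n t : ℕ) (p : ℝ) (A : (Fin t → Finset (Fin n)) → Prop) :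
    bernTestsProb n t p A
      = ∑ Ls : Fin t → Finset (Fin n), chi (A Ls) * testsWeight n t p Ls := by
  apply Finset.sum_congr rfl
  intro Ls _
  by_cases h : A Ls <;> simp [chi, h]

lemma testsWeight_nonneg {n t : ℕ} {p : ℝ} (hp0 : 0 ≤ p) (hp1 : p ≤ 1)
    (Ls : Fin t → Finset (Fin n)) : 0 ≤ testsWeight n t p Ls :=
  Finset.prod_nonneg fun i _ => testWeight_nonneg hp0 hp1 (Ls i)

lemma tp_forall (n t : ℕ) (p : ℝ) (A : Finset (Fin n) → Prop) :
    ∑ Ls : Fin t → Finset (Fin n), chi (∀ i, A (Ls i)) * testsWeight n t p Ls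
      = (∑ L : Finset (Fin n), chi (A L) * testWeight n p L) ^ t := by
  have hterm : ∀ Ls : Fin t → Finset (Fin n),
      chi (∀ i, A (Ls i)) * testsWeight n t p Ls
        = ∏ i, (chi (A (Ls i)) * testWeight n p (Ls i)) := by
    intro Ls
    unfold testsWeight
    by_cases h : ∀ i, A (Ls i)
    · rw [chi_pos h, one_mul]
      exact (Finset.prod_congr rfl fun i _ => by rw [chi_pos (h i), one_mul]).symm
    · push_neg at h
      obtain ⟨i, hi⟩ := h
      rw [chi_neg (fun hh => hi (hh i)), zero_mul]
      exact (Finset.prod_eq_zero (Finset.mem_univ i) (by rw [chi_neg hi, zero_mul])).symm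
  rw [Finset.sum_congr rfl fun Ls _ => hterm Ls]
  have h := Finset.prod_univ_sum (fun _ : Fin t => (Finset.univ : Finset (Finset (Fin n))))
    (fun _ L => chi (A L) * testWeight n p L)
  rw [Fintype.piFinset_univ] at h
  rw [← h, Finset.prod_const, Finset.card_univ, Fintype.card_fin]

lemma chi_and (A B : Prop) : chi (A ∧ B) = chi A * chi B := by
  by_cases hA : A <;> by_cases hB : B <;> simp [chi, hA, hB]

lemma chung_erdos {α β : Type*} [Fintype α] (W : α → ℝ) (hW : ∀ x, 0 ≤ W x)
    (s : Finset β) (M : β → α → Prop) :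
    (∑ e ∈ s, ∑ x : α, chi (M e x) * W x) ^ 2
      ≤ (∑ x : α, chi (∃ e ∈ s, M e x) * W x)
        * ∑ e ∈ s, ∑ e' ∈ s, ∑ x : α, chi (M e x ∧ M e' x) * W x := by
  classical
  set c : α → ℝ := fun x => ∑ e ∈ s, chi (M e x) with hc
  have h1 : ∑ e ∈ s, ∑ x : α, chi (M e x) * W x = ∑ x : α, c x * W x := by
    rw [Finset.sum_comm]
    exact Finset.sum_congr rfl fun x _ => (Finset.sum_mul _ _ _).symm
  have h2 : ∑ e ∈ s, ∑ e' ∈ s, ∑ x : α, chi (M e x ∧ M e' x) * W x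
      = ∑ x : α, c x * c x * W x := by
    have step : ∀ x : α, c x * c x * W x
        = ∑ e ∈ s, ∑ e' ∈ s, chi (M e x ∧ M e' x) * W x := by
      intro x
      rw [hc]
      rw [Finset.sum_mul_sum]
      rw [Finset.sum_mul]
      apply Finset.sum_congr rfl
      intro e _
      rw [Finset.sum_mul]
      exact Finset.sum_congr rfl fun e' _ => by rw [chi_and]
    calc ∑ e ∈ s, ∑ e' ∈ s, ∑ x : α, chi (M e x ∧ M e' x) * W x
        = ∑ e ∈ s, ∑ x : α, ∑ e' ∈ s, chi (M e x ∧ M e' x) * W x :=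
          Finset.sum_congr rfl fun e _ => Finset.sum_comm
      _ = ∑ x : α, ∑ e ∈ s, ∑ e' ∈ s, chi (M e x ∧ M e' x) * W x := Finset.sum_comm
      _ = ∑ x : α, c x * c x * W x :=
          Finset.sum_congr rfl fun x _ => (step x).symm
  rw [h1, h2]
  have hCS := Finset.sum_mul_sq_le_sq_mul_sq Finset.univ
    (fun x => Real.sqrt (W x) * chi (∃ e ∈ s, M e x))
    (fun x => Real.sqrt (W x) * c x)
  have hind : ∀ x : α, chi (∃ e ∈ s, M e x) * c x = c x := by
    intro x
    by_cases h : ∃ e ∈ s, M e x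
    · rw [chi_pos h, one_mul]
    · rw [chi_neg h, zero_mul, hc]
      symm
      apply Finset.sum_eq_zero
      intro e he
      exact chi_neg fun hm => h ⟨e, he, hm⟩
  have hfg : ∀ x : α, (Real.sqrt (W x) * chi (∃ e ∈ s, M e x)) * (Real.sqrt (W x) * c x)
      = c x * W x := by
    intro x
    have : Real.sqrt (W x) * Real.sqrt (W x) = W x := Real.mul_self_sqrt (hW x)
    calc (Real.sqrt (W x) * chi (∃ e ∈ s, M e x)) * (Real.sqrt (W x) * c x)
        = (Real.sqrt (W x) * Real.sqrt (W x)) * (chi (∃ e ∈ s, M e x) * c x) := by ring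
      _ = c x * W x := by rw [this, hind x]; ring
  have hf2 : ∀ x : α, (Real.sqrt (W x) * chi (∃ e ∈ s, M e x)) ^ 2
      = chi (∃ e ∈ s, M e x) * W x := by
    intro x
    have h1 : Real.sqrt (W x) * Real.sqrt (W x) = W x := Real.mul_self_sqrt (hW x)
    calc (Real.sqrt (W x) * chi (∃ e ∈ s, M e x)) ^ 2
        = (Real.sqrt (W x) * Real.sqrt (W x))
          * (chi (∃ e ∈ s, M e x) * chi (∃ e ∈ s, M e x)) := by ring
      _ = chi (∃ e ∈ s, M e x) * W x := by rw [h1, chi_sq]; ring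
  have hg2 : ∀ x : α, (Real.sqrt (W x) * c x) ^ 2 = c x * c x * W x := by
    intro x
    have h1 : Real.sqrt (W x) * Real.sqrt (W x) = W x := Real.mul_self_sqrt (hW x)
    calc (Real.sqrt (W x) * c x) ^ 2 = (Real.sqrt (W x) * Real.sqrt (W x)) * (c x * c x) := by
          ring
      _ = c x * c x * W x := by rw [h1]; ring
  rw [Finset.sum_congr rfl fun x _ => hfg x, Finset.sum_congr rfl fun x _ => hf2 x,
    Finset.sum_congr rfl fun x _ => hg2 x] at hCS
  exact hCS

lemma pairIn_mk {n : ℕ} (a b : Fin n) (L : Finset (Fin n)) :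
    pairIn s(a, b) L ↔ a ∈ L ∧ b ∈ L := by
  constructor
  · intro h
    exact ⟨h a (Sym2.mem_mk_left a b), h b (Sym2.mem_mk_right a b)⟩
  · rintro ⟨ha, hb⟩ v hv
    rcases Sym2.mem_iff.mp hv with rfl | rfl
    · exact ha
    · exact hb

lemma pairIn_mono {n : ℕ} (e : Sym2 (Fin n)) {L L' : Finset (Fin n)} (h : L ⊆ L')
    (hp : pairIn e L) : pairIn e L' := fun v hv => h (hp v hv)

lemma bp_pair (n : ℕ) (p : ℝ) (a b : Fin n) (hab : a ≠ b) :
    ∑ L : Finset (Fin n), chi (a ∈ L ∧ b ∈ L) * testWeight n p L = p ^ 2 := by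
  have h2 : ∑ L : Finset (Fin n), chi (a ∈ L ∧ b ∈ L) * testWeight n p L
      = ∑ L : Finset (Fin n), chi (a ∈ L ∧ b ∈ L ∧ True) * testWeight n p L :=
    Finset.sum_congr rfl fun L _ => by
      by_cases h : a ∈ L ∧ b ∈ L <;> simp [chi, h]
  rw [h2, sum_cond_pair n p a b hab (fun _ => True) (fun _ => Iff.rfl) (fun _ => Iff.rfl)]
  have h3 : ∑ L : Finset (Fin n), chi True * testWeight n p L
      = ∑ L : Finset (Fin n), testWeight n p L :=
    Finset.sum_congr rfl fun L _ => by rw [chi_pos trivial, one_mul]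
  rw [h3, sum_testWeight, mul_one]

lemma degOf_le_maxDeg {n : ℕ} (E : Finset (Sym2 (Fin n))) (v : Fin n) :
    degOf E v ≤ maxDeg E := Finset.le_sup (Finset.mem_univ v)

/-- The half-neighborhood count bound. -/
lemma nbrs_card_le {n : ℕ} (E : Finset (Sym2 (Fin n))) (a b : Fin n) :
    (Finset.univ.filter fun x : Fin n =>
        x ≠ a ∧ x ≠ b ∧ (s(a, x) ∈ E ∨ s(b, x) ∈ E)).card
      ≤ 2 * maxDeg E := by
  classical
  set na := Finset.univ.filter fun x : Fin n => x ≠ a ∧ s(a, x) ∈ E with hna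
  set nb := Finset.univ.filter fun x : Fin n => x ≠ b ∧ s(b, x) ∈ E with hnb
  have hsub : (Finset.univ.filter fun x : Fin n =>
      x ≠ a ∧ x ≠ b ∧ (s(a, x) ∈ E ∨ s(b, x) ∈ E)) ⊆ na ∪ nb := by
    intro x hx
    rw [Finset.mem_filter] at hx
    obtain ⟨_, hxa, hxb, hor⟩ := hx
    rcases hor with h | h
    · exact Finset.mem_union_left _ (Finset.mem_filter.mpr ⟨Finset.mem_univ x, hxa, h⟩)
    · exact Finset.mem_union_right _ (Finset.mem_filter.mpr ⟨Finset.mem_univ x, hxb, h⟩)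
  have hcard : ∀ (v : Fin n), (Finset.univ.filter fun x : Fin n =>
      x ≠ v ∧ s(v, x) ∈ E).card ≤ degOf E v := by
    intro v
    apply Finset.card_le_card_of_injOn (fun x => s(v, x))
    · intro x hx
      simp only [Finset.coe_filter, Set.mem_setOf_eq] at hx
      exact Finset.mem_coe.mpr (Finset.mem_filter.mpr ⟨hx.2.2, Sym2.mem_mk_left v x⟩)
    · intro x hx y hy hxy
      simp only [Finset.coe_filter, Set.mem_setOf_eq] at hx hy
      rcases Sym2.eq_iff.mp hxy with ⟨_, h⟩ | ⟨h1, h2⟩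
      · exact h
      · exact absurd h2 hx.2.1
  calc (Finset.univ.filter fun x : Fin n =>
        x ≠ a ∧ x ≠ b ∧ (s(a, x) ∈ E ∨ s(b, x) ∈ E)).card
      ≤ (na ∪ nb).card := Finset.card_le_card hsub
    _ ≤ na.card + nb.card := Finset.card_union_le _ _
    _ ≤ degOf E a + degOf E b := Nat.add_le_add (hcard a) (hcard b)
    _ ≤ 2 * maxDeg E := by
        have := degOf_le_maxDeg E a
        have := degOf_le_maxDeg E b
        omega
lemma qe_bounds (n : ℕ) (p : ℝ) (hp0 : 0 ≤ p) (hp1 : p ≤ 1)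
    (E : Finset (Sym2 (Fin n))) (hsimple : ∀ e ∈ E, ¬ e.IsDiag)
    (e : Sym2 (Fin n)) (he : e ∈ E) :
    p ^ 2 * (1 - (∑ L : Finset (Fin n), chi (covers E L) * testWeight n p L)
        - 2 * (maxDeg E : ℝ) * p)
      ≤ (∑ L : Finset (Fin n),
          chi (pairIn e L ∧ ¬ ∃ e' ∈ E, e' ≠ e ∧ pairIn e' L) * testWeight n p L)
    ∧ (∑ L : Finset (Fin n),
          chi (pairIn e L ∧ ¬ ∃ e' ∈ E, e' ≠ e ∧ pairIn e' L) * testWeight n p L)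
      ≤ p ^ 2 * (1 - (∑ L : Finset (Fin n), chi (covers E L) * testWeight n p L) + p ^ 2) := by
  classical
  obtain ⟨a, b⟩ := e
  have hab : a ≠ b := by
    intro h
    exact hsimple _ he (by rw [h]; exact Sym2.mk_isDiag_iff.mpr rfl)
  set P1 := ∑ L : Finset (Fin n), chi (covers E L) * testWeight n p L with hP1
  set D : Finset (Fin n) → Prop :=
    fun L => ¬ ∃ e' ∈ E, e' ≠ s(a, b) ∧ pairIn e' (insert a (insert b L)) with hD
  have hDa : ∀ L, D (insert a L) ↔ D L := by
    intro L
    have : insert a (insert b (insert a L)) = insert a (insert b L) := by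
      rw [Finset.insert_comm b a L, Finset.insert_idem, Finset.insert_comm a b L]
    rw [hD]
    simp only [this]
  have hDb : ∀ L, D (insert b L) ↔ D L := by
    intro L
    have : insert a (insert b (insert b L)) = insert a (insert b L) := by
      rw [Finset.insert_idem]
    rw [hD]
    simp only [this]
  have hstep1 : (∑ L : Finset (Fin n),
      chi (pairIn s(a, b) L ∧ ¬ ∃ e' ∈ E, e' ≠ s(a, b) ∧ pairIn e' L) * testWeight n p L)
      = ∑ L : Finset (Fin n), chi (a ∈ L ∧ b ∈ L ∧ D L) * testWeight n p L := by
    apply Finset.sum_congr rfl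
    intro L _
    congr 1
    apply chi_congr
    constructor
    · rintro ⟨hpe, hno⟩
      obtain ⟨ha, hb⟩ := (pairIn_mk a b L).mp hpe
      have hins : insert a (insert b L) = L := by
        rw [Finset.insert_eq_self.mpr hb, Finset.insert_eq_self.mpr ha]
      exact ⟨ha, hb, by rw [hD]; simp only [hins]; exact hno⟩
    · rintro ⟨ha, hb, hDL⟩
      have hins : insert a (insert b L) = L := by
        rw [Finset.insert_eq_self.mpr hb, Finset.insert_eq_self.mpr ha]
      refine ⟨(pairIn_mk a b L).mpr ⟨ha, hb⟩, ?_⟩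
      rw [hD] at hDL
      simpa only [hins] using hDL
  rw [hstep1, sum_cond_pair n p a b hab D hDa hDb]
  set QD := ∑ L : Finset (Fin n), chi (D L) * testWeight n p L with hQD
  have hLsub : ∀ L : Finset (Fin n), L ⊆ insert a (insert b L) :=
    fun L => (Finset.subset_insert b L).trans (Finset.subset_insert a _)
  -- upper bound
  have hupper : QD ≤ (1 - P1) + p ^ 2 := by
    have hpt : ∀ L, D L → (¬ covers E L) ∨ (a ∈ L ∧ b ∈ L) := by
      intro L hDL
      by_cases hc : covers E L
      · right
        obtain ⟨f, hf, hpf⟩ := hc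
        have hpf' : pairIn f (insert a (insert b L)) := pairIn_mono f (hLsub L) hpf
        have hfe : f = s(a, b) := by
          by_contra hne
          exact hDL ⟨f, hf, hne, hpf'⟩
        rw [hfe] at hpf
        exact (pairIn_mk a b L).mp hpf
      · left; exact hc
    calc QD ≤ (∑ L : Finset (Fin n), chi (¬ covers E L) * testWeight n p L)
        + ∑ L : Finset (Fin n), chi (a ∈ L ∧ b ∈ L) * testWeight n p L :=
          bp_add_le hp0 hp1 hpt
      _ = (1 - P1) + p ^ 2 := by rw [bp_compl, bp_pair n p a b hab]
  -- lower bound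
  set nbrs := Finset.univ.filter fun x : Fin n =>
    x ≠ a ∧ x ≠ b ∧ (s(a, x) ∈ E ∨ s(b, x) ∈ E) with hnbrs
  have hlower : 1 - P1 ≤ QD + 2 * (maxDeg E : ℝ) * p := by
    have hpt : ∀ L, (¬ covers E L) → D L ∨ (∃ x ∈ nbrs, x ∈ L) := by
      intro L hnc
      by_cases hDL : D L
      · left; exact hDL
      · right
        rw [hD, not_not] at hDL
        obtain ⟨f, hf, hfe, hpf⟩ := hDL
        have main : ∀ u v : Fin n, u ≠ v → s(u, v) ∈ E → s(u, v) ≠ s(a, b) →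
            u ∈ insert a (insert b L) → v ∈ insert a (insert b L) → u ∉ L →
            ∃ x ∈ nbrs, x ∈ L := by
          intro u v huv hfE hfne hu hv huL
          have hu' : u = a ∨ u = b := by
            rcases Finset.mem_insert.mp hu with h | h
            · left; exact h
            · rcases Finset.mem_insert.mp h with h' | h'
              · right; exact h'
              · exact absurd h' huL
          by_cases hvL : v ∈ L
          · -- v ∈ L; show v ∈ nbrs
            have hva : v ≠ a := by
              rintro rfl
              rcases hu' with rfl | rfl
              · exact huv rfl
              · exact hfne (Sym2.eq_swap)
            have hvb : v ≠ b := by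
              rintro rfl
              rcases hu' with rfl | rfl
              · exact hfne rfl
              · exact huv rfl
            have hor : s(a, v) ∈ E ∨ s(b, v) ∈ E := by
              rcases hu' with rfl | rfl
              · left; exact hfE
              · right; exact hfE
            exact ⟨v, Finset.mem_filter.mpr ⟨Finset.mem_univ v, hva, hvb, hor⟩, hvL⟩
          · -- both u, v outside L : f = e, contradiction
            have hv' : v = a ∨ v = b := by
              rcases Finset.mem_insert.mp hv with h | h
              · left; exact h
              · rcases Finset.mem_insert.mp h with h' | h'
                · right; exact h'
                · exact absurd h' hvL
            exfalso
            apply hfne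
            rcases hu' with rfl | rfl <;> rcases hv' with rfl | rfl
            · exact absurd rfl huv
            · rfl
            · exact Sym2.eq_swap
            · exact absurd rfl huv
        obtain ⟨u, v⟩ := f
        have huv : u ≠ v := by
          intro h
          exact hsimple _ hf (by rw [h]; exact Sym2.mk_isDiag_iff.mpr rfl)
        obtain ⟨hu, hv⟩ := (pairIn_mk u v _).mp hpf
        by_cases huL : u ∈ L
        · have hvL : v ∉ L := by
            intro hvL
            exact hnc ⟨s(u, v), hf, (pairIn_mk u v L).mpr ⟨huL, hvL⟩⟩
          exact main v u (Ne.symm huv) (Sym2.eq_swap ▸ hf) (Sym2.eq_swap ▸ hfe) hv hu hvL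
        · exact main u v huv hf hfe hu hv huL
    have hstep : (1 - P1) ≤ QD + ∑ L : Finset (Fin n),
        chi (∃ x ∈ nbrs, x ∈ L) * testWeight n p L := by
      have := bp_add_le hp0 hp1 hpt
      rw [bp_compl] at this
      exact this
    have hR : ∑ L : Finset (Fin n), chi (∃ x ∈ nbrs, x ∈ L) * testWeight n p L
        ≤ 2 * (maxDeg E : ℝ) * p := by
      calc ∑ L : Finset (Fin n), chi (∃ x ∈ nbrs, x ∈ L) * testWeight n p L
          ≤ ∑ x ∈ nbrs, ∑ L : Finset (Fin n), chi (x ∈ L) * testWeight n p L :=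
            bp_union_le hp0 hp1 nbrs _
        _ = ∑ x ∈ nbrs, p := Finset.sum_congr rfl fun x _ => bp_mem n p x
        _ = (nbrs.card : ℝ) * p := by rw [Finset.sum_const, nsmul_eq_mul]
        _ ≤ 2 * (maxDeg E : ℝ) * p := by
            apply mul_le_mul_of_nonneg_right _ hp0
            have := nbrs_card_le E a b
            calc (nbrs.card : ℝ) ≤ ((2 * maxDeg E : ℕ) : ℝ) := Nat.cast_le.mpr this
              _ = 2 * (maxDeg E : ℝ) := by push_cast; ring
    linarith
  have hp2 : (0:ℝ) ≤ p ^ 2 := sq_nonneg p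
  constructor
  · exact mul_le_mul_of_nonneg_left (by linarith) hp2
  · exact mul_le_mul_of_nonneg_left (by linarith) hp2
/-- de Caen lower bound on the probability of some masked edge.
Let `G` have `k ≥ 1` edges and maximum degree `d`, and perform `t` i.i.d. Bernoulli(p)
tests.  With `P₁ = P_G[Y=1]`, `ξ = (1+2d)p²`, `ξ′ = 2dp`, and assuming
`p²(1 − P₁ + ξ) ≤ 1`, the probability that at least one edge is masked is at least
`k(1 − p²(1−P₁+ξ))^{2t} / ((1 − p²(1−P₁−ξ′))^t + k·max(0, 1 − 2p²(1−P₁−ξ′))^t)`. -/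
theorem statement14 (n t k d : ℕ) (p : ℝ) (hp0 : 0 ≤ p) (hp1 : p ≤ 1)
    (E : Finset (Sym2 (Fin n))) (hsimple : ∀ e ∈ E, ¬ e.IsDiag)
    (hk : E.card = k) (hk1 : 1 ≤ k) (hmax : maxDeg E = d)
    (hass : p ^ 2 * (1 - bernProb n p (covers E) + (1 + 2 * d) * p ^ 2) ≤ 1) :
    (k : ℝ) *
        (1 - p ^ 2 * (1 - bernProb n p (covers E) + (1 + 2 * d) * p ^ 2)) ^ (2 * t) /
        ((1 - p ^ 2 * (1 - bernProb n p (covers E) - 2 * d * p)) ^ t +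
          (k : ℝ) * (max 0 (1 - 2 * p ^ 2 * (1 - bernProb n p (covers E) - 2 * d * p))) ^ t)
      ≤ bernTestsProb n t p (fun Ls => ∃ e ∈ E,
          ∀ i, pairIn e (Ls i) → ∃ e' ∈ E, e' ≠ e ∧ pairIn e' (Ls i)) := by
  classical
  set P1 : ℝ := bernProb n p (covers E) with hP1def
  have hP1chi : P1 = ∑ L : Finset (Fin n), chi (covers E L) * testWeight n p L :=
    bernProb_eq n p (covers E)
  set A : ℝ := p ^ 2 * (1 - P1 + (1 + 2 * d) * p ^ 2) with hAdef
  set B : ℝ := p ^ 2 * (1 - P1 - 2 * d * p) with hBdef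
  set C : ℝ := max 0 (1 - 2 * p ^ 2 * (1 - P1 - 2 * d * p)) with hCdef
  have hC1 : C = max 0 (1 - 2 * B) := by rw [hCdef, hBdef]; ring_nf
  have hCnn : 0 ≤ C := le_max_left 0 _
  -- per-edge single-test quantities
  have hqbounds : ∀ e ∈ E,
      B ≤ (∑ L : Finset (Fin n),
            chi (pairIn e L ∧ ¬ ∃ e' ∈ E, e' ≠ e ∧ pairIn e' L) * testWeight n p L)
      ∧ (∑ L : Finset (Fin n),
            chi (pairIn e L ∧ ¬ ∃ e' ∈ E, e' ≠ e ∧ pairIn e' L) * testWeight n p L) ≤ A := by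
    intro e he
    obtain ⟨hlow, hup⟩ := qe_bounds n p hp0 hp1 E hsimple e he
    rw [hmax] at hlow
    constructor
    · calc B = p ^ 2 * (1 - P1 - 2 * (d : ℝ) * p) := by rw [hBdef]
        _ ≤ _ := by rw [hP1chi]; exact hlow
    · calc (∑ L : Finset (Fin n),
            chi (pairIn e L ∧ ¬ ∃ e' ∈ E, e' ≠ e ∧ pairIn e' L) * testWeight n p L)
          ≤ p ^ 2 * (1 - P1 + p ^ 2) := by rw [hP1chi]; exact hup
        _ ≤ A := by
            rw [hAdef]
            apply mul_le_mul_of_nonneg_left _ (sq_nonneg p)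
            have h2d : (0:ℝ) ≤ 2 * d := by positivity
            nlinarith [sq_nonneg p]
  -- alpha
  have halpha : ∀ e ∈ E,
      (∑ L : Finset (Fin n),
          chi (pairIn e L → ∃ e' ∈ E, e' ≠ e ∧ pairIn e' L) * testWeight n p L)
      = 1 - (∑ L : Finset (Fin n),
          chi (pairIn e L ∧ ¬ ∃ e' ∈ E, e' ≠ e ∧ pairIn e' L) * testWeight n p L) := by
    intro e _
    rw [← bp_compl]
    apply Finset.sum_congr rfl
    intro L _
    congr 1
    apply chi_congr
    constructor
    · intro h hand
      exact hand.2 (h hand.1)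
    · intro h hpe
      by_contra hno
      exact h ⟨hpe, hno⟩
  have h1A : 0 ≤ 1 - A := by linarith [hass]
  have hBA : B ≤ A := by
    rw [hAdef, hBdef]
    apply mul_le_mul_of_nonneg_left _ (sq_nonneg p)
    have h2d : (0:ℝ) ≤ 2 * d := by positivity
    nlinarith [sq_nonneg p, mul_nonneg (mul_nonneg h2d hp0) (sq_nonneg p)]
  have h1B : 0 ≤ 1 - B := by linarith
  have halpha_bounds : ∀ e ∈ E,
      (1 - A ≤ ∑ L : Finset (Fin n),
          chi (pairIn e L → ∃ e' ∈ E, e' ≠ e ∧ pairIn e' L) * testWeight n p L)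
      ∧ (∑ L : Finset (Fin n),
          chi (pairIn e L → ∃ e' ∈ E, e' ≠ e ∧ pairIn e' L) * testWeight n p L) ≤ 1 - B := by
    intro e he
    rw [halpha e he]
    obtain ⟨h1, h2⟩ := hqbounds e he
    exact ⟨by linarith, by linarith⟩
  -- pair bound
  have hbeta : ∀ e ∈ E, ∀ e' ∈ E, e ≠ e' →
      (∑ L : Finset (Fin n),
          chi ((pairIn e L → ∃ f ∈ E, f ≠ e ∧ pairIn f L)
            ∧ (pairIn e' L → ∃ f ∈ E, f ≠ e' ∧ pairIn f L)) * testWeight n p L) ≤ C := by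
    intro e he e' he' hne
    have hdisj : ∀ L : Finset (Fin n),
        ¬ ((pairIn e L ∧ ¬ ∃ f ∈ E, f ≠ e ∧ pairIn f L)
          ∧ (pairIn e' L ∧ ¬ ∃ f ∈ E, f ≠ e' ∧ pairIn f L)) := by
      rintro L ⟨⟨hpe, hno⟩, ⟨hpe', _⟩⟩
      exact hno ⟨e', he', Ne.symm hne, hpe'⟩
    have hsum := bp_disjoint_add_le hp0 hp1 hdisj
    have hmono := bp_mono hp0 hp1
      (A := fun L => (pairIn e L ∧ ¬ ∃ f ∈ E, f ≠ e ∧ pairIn f L)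
          ∨ (pairIn e' L ∧ ¬ ∃ f ∈ E, f ≠ e' ∧ pairIn f L))
      (B := fun L =>
        ¬ ((pairIn e L → ∃ f ∈ E, f ≠ e ∧ pairIn f L)
          ∧ (pairIn e' L → ∃ f ∈ E, f ≠ e' ∧ pairIn f L)))
      (by
        rintro L (⟨hpe, hno⟩ | ⟨hpe, hno⟩) ⟨himp, himp'⟩
        · exact hno (himp hpe)
        · exact hno (himp' hpe))
    rw [bp_compl] at hmono
    obtain ⟨hq1, _⟩ := hqbounds e he
    obtain ⟨hq2, _⟩ := hqbounds e' he'
    have hC2 : (∑ L : Finset (Fin n),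
        chi ((pairIn e L → ∃ f ∈ E, f ≠ e ∧ pairIn f L)
          ∧ (pairIn e' L → ∃ f ∈ E, f ≠ e' ∧ pairIn f L)) * testWeight n p L)
        ≤ 1 - 2 * B := by linarith
    rw [hC1]
    exact hC2.trans (le_max_right 0 _)
  -- tests level: Chung-Erdos
  have hW : ∀ Ls : Fin t → Finset (Fin n), 0 ≤ testsWeight n t p Ls :=
    fun Ls => testsWeight_nonneg hp0 hp1 Ls
  have hCE := chung_erdos (testsWeight n t p) hW E
    (fun e Ls => ∀ i, pairIn e (Ls i) → ∃ e' ∈ E, e' ≠ e ∧ pairIn e' (Ls i))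
  -- identify the three sums
  have hsingle : ∀ e ∈ E,
      (∑ Ls : Fin t → Finset (Fin n),
        chi (∀ i, pairIn e (Ls i) → ∃ e' ∈ E, e' ≠ e ∧ pairIn e' (Ls i))
          * testsWeight n t p Ls)
      = (∑ L : Finset (Fin n),
          chi (pairIn e L → ∃ e' ∈ E, e' ≠ e ∧ pairIn e' L) * testWeight n p L) ^ t :=
    fun e _ => tp_forall n t p (fun L => pairIn e L → ∃ e' ∈ E, e' ≠ e ∧ pairIn e' L)
  have hpairsum : ∀ e ∈ E, ∀ e' ∈ E,
      (∑ Ls : Fin t → Finset (Fin n),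
        chi ((∀ i, pairIn e (Ls i) → ∃ f ∈ E, f ≠ e ∧ pairIn f (Ls i))
          ∧ (∀ i, pairIn e' (Ls i) → ∃ f ∈ E, f ≠ e' ∧ pairIn f (Ls i)))
          * testsWeight n t p Ls)
      = (∑ L : Finset (Fin n),
          chi ((pairIn e L → ∃ f ∈ E, f ≠ e ∧ pairIn f L)
            ∧ (pairIn e' L → ∃ f ∈ E, f ≠ e' ∧ pairIn f L)) * testWeight n p L) ^ t := by
    intro e _ e' _
    rw [← tp_forall n t p (fun L => (pairIn e L → ∃ f ∈ E, f ≠ e ∧ pairIn f L)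
        ∧ (pairIn e' L → ∃ f ∈ E, f ≠ e' ∧ pairIn f L))]
    apply Finset.sum_congr rfl
    intro Ls _
    congr 1
    apply chi_congr
    exact (forall_and).symm
  -- numerator bound
  have hnum : (k : ℝ) * (1 - A) ^ t
      ≤ ∑ e ∈ E, (∑ Ls : Fin t → Finset (Fin n),
          chi (∀ i, pairIn e (Ls i) → ∃ e' ∈ E, e' ≠ e ∧ pairIn e' (Ls i))
            * testsWeight n t p Ls) := by
    have : ∀ e ∈ E, (1 - A) ^ t ≤ (∑ Ls : Fin t → Finset (Fin n),
        chi (∀ i, pairIn e (Ls i) → ∃ e' ∈ E, e' ≠ e ∧ pairIn e' (Ls i))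
          * testsWeight n t p Ls) := by
      intro e he
      rw [hsingle e he]
      exact pow_le_pow_left₀ h1A (halpha_bounds e he).1 t
    calc (k : ℝ) * (1 - A) ^ t = ∑ _e ∈ E, (1 - A) ^ t := by
          rw [Finset.sum_const, hk, nsmul_eq_mul]
      _ ≤ _ := Finset.sum_le_sum this
  -- denominator bound
  have hden : (∑ e ∈ E, ∑ e' ∈ E, ∑ Ls : Fin t → Finset (Fin n),
      chi ((∀ i, pairIn e (Ls i) → ∃ f ∈ E, f ≠ e ∧ pairIn f (Ls i))
        ∧ (∀ i, pairIn e' (Ls i) → ∃ f ∈ E, f ≠ e' ∧ pairIn f (Ls i)))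
        * testsWeight n t p Ls)
      ≤ (k : ℝ) * ((1 - B) ^ t + (k : ℝ) * C ^ t) := by
    have hinner : ∀ e ∈ E, (∑ e' ∈ E, ∑ Ls : Fin t → Finset (Fin n),
        chi ((∀ i, pairIn e (Ls i) → ∃ f ∈ E, f ≠ e ∧ pairIn f (Ls i))
          ∧ (∀ i, pairIn e' (Ls i) → ∃ f ∈ E, f ≠ e' ∧ pairIn f (Ls i)))
          * testsWeight n t p Ls)
        ≤ (1 - B) ^ t + (k : ℝ) * C ^ t := by
      intro e he
      rw [← Finset.add_sum_erase E _ he]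
      have hdiag : (∑ Ls : Fin t → Finset (Fin n),
          chi ((∀ i, pairIn e (Ls i) → ∃ f ∈ E, f ≠ e ∧ pairIn f (Ls i))
            ∧ (∀ i, pairIn e (Ls i) → ∃ f ∈ E, f ≠ e ∧ pairIn f (Ls i)))
            * testsWeight n t p Ls) ≤ (1 - B) ^ t := by
        rw [hpairsum e he e he]
        have hle : (∑ L : Finset (Fin n),
            chi ((pairIn e L → ∃ f ∈ E, f ≠ e ∧ pairIn f L)
              ∧ (pairIn e L → ∃ f ∈ E, f ≠ e ∧ pairIn f L)) * testWeight n p L)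
            ≤ 1 - B := by
          have heq : (∑ L : Finset (Fin n),
              chi ((pairIn e L → ∃ f ∈ E, f ≠ e ∧ pairIn f L)
                ∧ (pairIn e L → ∃ f ∈ E, f ≠ e ∧ pairIn f L)) * testWeight n p L)
              = ∑ L : Finset (Fin n),
                chi (pairIn e L → ∃ f ∈ E, f ≠ e ∧ pairIn f L) * testWeight n p L := by
            apply Finset.sum_congr rfl
            intro L _
            congr 1
            exact chi_congr (and_self_iff)
          rw [heq]
          exact (halpha_bounds e he).2
        exact pow_le_pow_left₀ (bp_nonneg hp0 hp1 _) hle t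
      have hoff : (∑ e' ∈ E.erase e, ∑ Ls : Fin t → Finset (Fin n),
          chi ((∀ i, pairIn e (Ls i) → ∃ f ∈ E, f ≠ e ∧ pairIn f (Ls i))
            ∧ (∀ i, pairIn e' (Ls i) → ∃ f ∈ E, f ≠ e' ∧ pairIn f (Ls i)))
            * testsWeight n t p Ls)
          ≤ (k : ℝ) * C ^ t := by
        have hterm : ∀ e' ∈ E.erase e, (∑ Ls : Fin t → Finset (Fin n),
            chi ((∀ i, pairIn e (Ls i) → ∃ f ∈ E, f ≠ e ∧ pairIn f (Ls i))
              ∧ (∀ i, pairIn e' (Ls i) → ∃ f ∈ E, f ≠ e' ∧ pairIn f (Ls i)))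
              * testsWeight n t p Ls) ≤ C ^ t := by
          intro e' he'
          have he'E : e' ∈ E := Finset.mem_of_mem_erase he'
          have hne : e ≠ e' := fun h => (Finset.ne_of_mem_erase he') h.symm
          rw [hpairsum e he e' he'E]
          exact pow_le_pow_left₀ (bp_nonneg hp0 hp1 _) (hbeta e he e' he'E hne) t
        calc (∑ e' ∈ E.erase e, ∑ Ls : Fin t → Finset (Fin n),
            chi ((∀ i, pairIn e (Ls i) → ∃ f ∈ E, f ≠ e ∧ pairIn f (Ls i))
              ∧ (∀ i, pairIn e' (Ls i) → ∃ f ∈ E, f ≠ e' ∧ pairIn f (Ls i)))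
              * testsWeight n t p Ls)
            ≤ ∑ _e' ∈ E.erase e, C ^ t := Finset.sum_le_sum hterm
          _ = ((E.erase e).card : ℝ) * C ^ t := by rw [Finset.sum_const, nsmul_eq_mul]
          _ ≤ (k : ℝ) * C ^ t := by
              apply mul_le_mul_of_nonneg_right _ (pow_nonneg hCnn t)
              have : (E.erase e).card ≤ k := by
                rw [← hk]
                exact Finset.card_le_card (Finset.erase_subset e E)
              exact_mod_cast this
      linarith
    calc (∑ e ∈ E, ∑ e' ∈ E, ∑ Ls : Fin t → Finset (Fin n),
        chi ((∀ i, pairIn e (Ls i) → ∃ f ∈ E, f ≠ e ∧ pairIn f (Ls i))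
          ∧ (∀ i, pairIn e' (Ls i) → ∃ f ∈ E, f ≠ e' ∧ pairIn f (Ls i)))
          * testsWeight n t p Ls)
        ≤ ∑ _e ∈ E, ((1 - B) ^ t + (k : ℝ) * C ^ t) := Finset.sum_le_sum hinner
      _ = (k : ℝ) * ((1 - B) ^ t + (k : ℝ) * C ^ t) := by
          rw [Finset.sum_const, hk, nsmul_eq_mul]
  -- total probability
  set Ptot : ℝ := ∑ Ls : Fin t → Finset (Fin n),
      chi (∃ e ∈ E, ∀ i, pairIn e (Ls i) → ∃ e' ∈ E, e' ≠ e ∧ pairIn e' (Ls i))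
        * testsWeight n t p Ls with hPtotdef
  have hPtot_eq : bernTestsProb n t p (fun Ls => ∃ e ∈ E,
      ∀ i, pairIn e (Ls i) → ∃ e' ∈ E, e' ≠ e ∧ pairIn e' (Ls i)) = Ptot :=
    bernTestsProb_eq n t p _
  have hPtotnn : 0 ≤ Ptot := Finset.sum_nonneg fun Ls _ =>
    mul_nonneg (chi_nonneg _) (hW Ls)
  rw [hPtot_eq]
  -- final assembly
  set Dden : ℝ := (1 - B) ^ t + (k : ℝ) * C ^ t with hDdendef
  have hDnn : 0 ≤ Dden := by
    have := pow_nonneg h1B t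
    have := mul_nonneg (Nat.cast_nonneg k : (0:ℝ) ≤ k) (pow_nonneg hCnn t)
    rw [hDdendef]
    linarith
  have hkpos : (0:ℝ) < k := by exact_mod_cast hk1
  have hkey : (k : ℝ) * (1 - A) ^ (2 * t) ≤ Ptot * Dden := by
    have hX : (1 - A) ^ (2 * t) = ((1 - A) ^ t) ^ 2 := by
      rw [pow_mul']
    have hsq : ((k : ℝ) * (1 - A) ^ t) ^ 2
        ≤ (∑ e ∈ E, (∑ Ls : Fin t → Finset (Fin n),
          chi (∀ i, pairIn e (Ls i) → ∃ e' ∈ E, e' ≠ e ∧ pairIn e' (Ls i))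
            * testsWeight n t p Ls)) ^ 2 :=
      pow_le_pow_left₀ (mul_nonneg (le_of_lt hkpos) (pow_nonneg h1A t)) hnum 2
    have hchain : ((k : ℝ) * (1 - A) ^ t) ^ 2 ≤ Ptot * ((k : ℝ) * Dden) := by
      calc ((k : ℝ) * (1 - A) ^ t) ^ 2
          ≤ (∑ e ∈ E, (∑ Ls : Fin t → Finset (Fin n),
              chi (∀ i, pairIn e (Ls i) → ∃ e' ∈ E, e' ≠ e ∧ pairIn e' (Ls i))
                * testsWeight n t p Ls)) ^ 2 := hsq
        _ ≤ Ptot * (∑ e ∈ E, ∑ e' ∈ E, ∑ Ls : Fin t → Finset (Fin n),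
              chi ((∀ i, pairIn e (Ls i) → ∃ f ∈ E, f ≠ e ∧ pairIn f (Ls i))
                ∧ (∀ i, pairIn e' (Ls i) → ∃ f ∈ E, f ≠ e' ∧ pairIn f (Ls i)))
                * testsWeight n t p Ls) := hCE
        _ ≤ Ptot * ((k : ℝ) * Dden) := by
            apply mul_le_mul_of_nonneg_left _ hPtotnn
            rw [hDdendef]
            exact hden
    have hfin : (k : ℝ) * ((k : ℝ) * ((1 - A) ^ (2 * t)))
        ≤ (k : ℝ) * (Ptot * Dden) := by
      calc (k : ℝ) * ((k : ℝ) * ((1 - A) ^ (2 * t)))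
          = ((k : ℝ) * (1 - A) ^ t) ^ 2 := by rw [hX]; ring
        _ ≤ Ptot * ((k : ℝ) * Dden) := hchain
        _ = (k : ℝ) * (Ptot * Dden) := by ring
    have := le_of_mul_le_mul_left hfin hkpos
    linarith
  rcases eq_or_lt_of_le hDnn with hD0 | hDpos
  · rw [← hD0, div_zero]
    exact hPtotnn
  · rw [div_le_iff₀ hDpos]
    exact hkey

end
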